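/- If component 1 is in series with the rest of a coherent system, i.e., φ(x) = x_1·ψ(x_2,...,x_n) with ψ coherent, and p_1 ≤ p_j for some j ∈ {2,...,n}, then the Birnbaum importance satisfies I^B_φ(1) ≥ I^B_φ(j), where I^B_φ(k) = h_φ(p,1_k) - h_φ(p,0_k). -/
import Mathlib

open MeasureTheory ProbabilityTheory

noncomputable def cov {Ω : Type*} [MeasurableSpace Ω] (μ : Measure Ω) (U V : Ω → ℝ) : ℝ :=
  (∫ ω, U ω * V ω ∂μ) - (∫ ω, U ω ∂μ) * (∫ ω, V ω ∂μ)

def b2r (x : Bool) : ℝ := if x then 1 else 0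

noncomputable def rel {n : ℕ} (φ : (Fin n → Bool) → Bool) (p : Fin n → ℝ) : ℝ :=
  ∑ x : Fin n → Bool, (if φ x then (1:ℝ) else 0) * ∏ i, (if x i then p i else 1 - p i)

private lemma wsplit {n : ℕ} (q : Fin n → ℝ) (x : Fin n → Bool) (k : Fin n) :
    (∏ l, (if x l then q l else 1 - q l)) =
      (if x k then q k else 1 - q k) *
        ∏ l ∈ Finset.univ.erase k, (if x l then q l else 1 - q l) :=
  (Finset.mul_prod_erase _ _ (Finset.mem_univ k)).symm

private lemma werase_update {n : ℕ} (q : Fin n → ℝ) (b : ℝ) (x : Fin n → Bool) (k : Fin n) :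
    (∏ l ∈ Finset.univ.erase k,
        (if x l then Function.update q k b l else 1 - Function.update q k b l)) =
      ∏ l ∈ Finset.univ.erase k, (if x l then q l else 1 - q l) := by
  refine Finset.prod_congr rfl fun l hl => ?_
  rw [Function.update_of_ne (Finset.ne_of_mem_erase hl)]

private lemma pivot {n : ℕ} (φ : (Fin n → Bool) → Bool) (q : Fin n → ℝ) (k : Fin n) :
    rel φ q = q k * rel φ (Function.update q k 1) +
      (1 - q k) * rel φ (Function.update q k 0) := by
  unfold rel
  rw [Finset.mul_sum, Finset.mul_sum, ← Finset.sum_add_distrib]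
  refine Finset.sum_congr rfl fun x _ => ?_
  rw [wsplit q x k, wsplit (Function.update q k 1) x k, wsplit (Function.update q k 0) x k,
    werase_update, werase_update, Function.update_self, Function.update_self]
  cases hx : x k <;> simp [hx]

private lemma rel_series_zero {n : ℕ} (i : Fin n) (ψ : (Fin n → Bool) → Bool)
    (u : Fin n → ℝ) (hu : u i = 0) :
    rel (fun x => x i && ψ x) u = 0 := by
  unfold rel
  refine Finset.sum_eq_zero fun x _ => ?_
  cases hx : x i
  · simp [hx]
  · rw [wsplit u x i, hx, hu]; simp

private lemma rel_series_one {n : ℕ} (i : Fin n) (ψ : (Fin n → Bool) → Bool)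
    (u : Fin n → ℝ) (hu : u i = 1) :
    rel (fun x => x i && ψ x) u = rel ψ u := by
  unfold rel
  refine Finset.sum_congr rfl fun x _ => ?_
  cases hx : x i
  · rw [wsplit u x i]; simp [hx, hu]
  · simp [hx]

private lemma rel_nonneg {n : ℕ} (ψ : (Fin n → Bool) → Bool) (u : Fin n → ℝ)
    (hu : ∀ k, u k ∈ Set.Icc (0:ℝ) 1) : 0 ≤ rel ψ u := by
  refine Finset.sum_nonneg fun x _ => mul_nonneg (by positivity)
    (Finset.prod_nonneg fun l _ => ?_)
  rcases hu l with ⟨h0, h1⟩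
  cases x l <;> simp <;> linarith

private lemma rel_update_le {n : ℕ} (j : Fin n) (ψ : (Fin n → Bool) → Bool)
    (hψ : Monotone ψ) (u : Fin n → ℝ) (hu : ∀ k, u k ∈ Set.Icc (0:ℝ) 1) :
    rel ψ (Function.update u j 0) ≤ rel ψ (Function.update u j 1) := by
  have hflip : Function.Involutive (fun x : Fin n → Bool => Function.update x j (!(x j))) := by
    intro x
    funext l
    by_cases hl : l = j <;> simp [Function.update_apply, hl]
  unfold rel
  rw [← Function.Bijective.sum_comp hflip.bijective
    (fun x => (if ψ x then (1:ℝ) else 0) *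
      ∏ l, (if x l then Function.update u j 1 l else 1 - Function.update u j 1 l))]
  refine Finset.sum_le_sum fun x _ => ?_
  set y : Fin n → Bool := Function.update x j (!(x j)) with hy
  have hR : (∏ l ∈ Finset.univ.erase j, (if y l then u l else 1 - u l)) =
      ∏ l ∈ Finset.univ.erase j, (if x l then u l else 1 - u l) := by
    refine Finset.prod_congr rfl fun l hl => ?_
    rw [hy, Function.update_of_ne (Finset.ne_of_mem_erase hl)]
  have hRnn : 0 ≤ ∏ l ∈ Finset.univ.erase j, (if x l then u l else 1 - u l) := by
    refine Finset.prod_nonneg fun l _ => ?_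
    rcases hu l with ⟨h0, h1⟩
    cases x l <;> simp <;> linarith
  rw [wsplit (Function.update u j 0) x j, wsplit (Function.update u j 1) y j,
    werase_update, werase_update, hR, Function.update_self, Function.update_self]
  have hyj : y j = !(x j) := Function.update_self _ _ _
  cases hx : x j
  · -- x j = false : compare ψ x with ψ y where y = x with j ↦ true
    have hxy : x ≤ y := by
      intro l
      by_cases hl : l = j
      · subst hl; rw [hyj, hx]; simp
      · rw [hy, Function.update_of_ne hl]
    have hmono : ψ x ≤ ψ y := hψ hxy
    rw [hyj, hx]
    have : (if ψ x then (1:ℝ) else 0) ≤ (if ψ y then (1:ℝ) else 0) := by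
      cases hpx : ψ x
      · positivity
      · have : ψ y = true := by
          cases hpy : ψ y
          · exact absurd (hpx ▸ hpy ▸ hmono) (by decide)
          · rfl
        simp [this]
    norm_num
    have h2 := mul_le_mul_of_nonneg_right this hRnn
    simpa using h2
  · rw [hyj, hx]
    norm_num

theorem stmt10 {n : ℕ} (i j : Fin n) (hij : j ≠ i)
    (ψ : (Fin n → Bool) → Bool)
    (hψdep : ∀ (x : Fin n → Bool) (b : Bool), ψ (Function.update x i b) = ψ x)
    (hψmono : Monotone ψ)
    (hψrel : ∀ k, k ≠ i →
      ∃ x, ψ (Function.update x k true) ≠ ψ (Function.update x k false))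
    (p : Fin n → ℝ) (h01 : ∀ k, p k ∈ Set.Icc (0:ℝ) 1) (hp : p i ≤ p j) :
    rel (fun x => x i && ψ x) (Function.update p j 1) -
        rel (fun x => x i && ψ x) (Function.update p j 0) ≤
      rel (fun x => x i && ψ x) (Function.update p i 1) -
        rel (fun x => x i && ψ x) (Function.update p i 0) := by
  have hij' : i ≠ j := hij.symm
  set u : Fin n → ℝ := Function.update p i 1 with hu
  set E1 : ℝ := rel ψ (Function.update u j 1) with hE1
  set E0 : ℝ := rel ψ (Function.update u j 0) with hE0
  have hu01 : ∀ k, u k ∈ Set.Icc (0:ℝ) 1 := by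
    intro k
    by_cases hk : k = i
    · subst hk; rw [hu, Function.update_self]; exact ⟨zero_le_one, le_refl 1⟩
    · rw [hu, Function.update_of_ne hk]; exact h01 k
  -- E0 ≥ 0, E0 ≤ E1
  have hE0nn : 0 ≤ E0 := by
    refine rel_nonneg _ _ fun k => ?_
    by_cases hk : k = j
    · subst hk; rw [Function.update_self]; exact ⟨le_refl 0, zero_le_one⟩
    · rw [Function.update_of_ne hk]; exact hu01 k
  have hE01 : E0 ≤ E1 := rel_update_le j ψ hψmono u hu01
  -- commute updates
  have hc1 : Function.update u j 1 = Function.update (Function.update p j 1) i 1 := by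
    rw [hu, Function.update_comm hij']
  have hc0 : Function.update u j 0 = Function.update (Function.update p j 0) i 1 := by
    rw [hu, Function.update_comm hij']
  -- LHS computation
  have hL1 : rel (fun x => x i && ψ x) (Function.update p j 1) = p i * E1 := by
    rw [pivot _ _ i, rel_series_zero i ψ _ (Function.update_self _ _ _),
      rel_series_one i ψ _ (Function.update_self _ _ _),
      Function.update_of_ne hij', hE1, hc1]
    ring
  have hL0 : rel (fun x => x i && ψ x) (Function.update p j 0) = p i * E0 := by
    rw [pivot _ _ i, rel_series_zero i ψ _ (Function.update_self _ _ _),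
      rel_series_one i ψ _ (Function.update_self _ _ _),
      Function.update_of_ne hij', hE0, hc0]
    ring
  -- RHS computation
  have hR1 : rel (fun x => x i && ψ x) (Function.update p i 1) =
      u j * E1 + (1 - u j) * E0 := by
    rw [rel_series_one i ψ _ (Function.update_self _ _ _), ← hu, pivot ψ u j, hE1, hE0]
  have hR0 : rel (fun x => x i && ψ x) (Function.update p i 0) = 0 :=
    rel_series_zero i ψ _ (Function.update_self _ _ _)
  have huj : u j = p j := by rw [hu, Function.update_of_ne hij]
  rw [hL1, hL0, hR1, hR0, huj]
  rcases h01 i with ⟨hpi0, _⟩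
  rcases h01 j with ⟨_, hpj1⟩
  nlinarith [mul_nonneg (sub_nonneg.mpr hp) (hE0nn.trans hE01),
    mul_nonneg (sub_nonneg.mpr hpj1) hE0nn, mul_nonneg hpi0 hE0nn]
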